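/- Let a > 0 and for each x ∈ ℝⁿ let P_{a,x}(y) = (a/2)|y-x|² + t_x be the paraboloid of opening a and center x touching a fixed nonempty closed set Γ̄ ⊆ U^n(0,1) × ℝ from above, where t_x = sup{z_{n+1} - (a/2)|z'-x|² : z ∈ Γ̄} (assumed finite). Then the map x ↦ t_x is Lipschitz on B^n(0,1), and the map sending (w, η) ∈ A_a(Γ;C) to the unique center x = w' + η'/(a·η_{n+1}) is well-defined and surjective onto C whenever A_a(Γ;C) is defined via touching paraboloids with centers in the closed set C ⊆ B^n(0,1) and every center in C admits a touching point. -/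

import Mathlib

open MeasureTheory Metric Set Filter
open scoped RealInnerProductSpace ENNReal NNReal Topology

noncomputable section

/-- `n`-dimensional Euclidean space. -/
abbrev Eu (n : ℕ) := EuclideanSpace ℝ (Fin n)

/-- Append a last coordinate: `(x, t) ∈ ℝⁿ × ℝ ≅ ℝ^(n+1)`. -/
def snoc' {n : ℕ} (x : Eu n) (t : ℝ) : Eu (n+1) :=
  WithLp.toLp 2 (Fin.snoc (α := fun _ => ℝ) (WithLp.ofLp x) t)

/-- The first `n` coordinates `z'` of `z ∈ ℝ^(n+1)`. -/
def tail' {n : ℕ} (z : Eu (n+1)) : Eu n := WithLp.toLp 2 (fun i : Fin n => z i.castSucc)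

/-- The last coordinate `z_{n+1}` of `z ∈ ℝ^(n+1)`. -/
def lastc {n : ℕ} (z : Eu (n+1)) : ℝ := z (Fin.last n)

/-- The graph `Σ(f)` of `f : ℝⁿ → ℝ`. -/
def graphOf {n : ℕ} (f : Eu n → ℝ) : Set (Eu (n+1)) := {z | lastc z = f (tail' z)}

/-- The open supergraph `Σ⁺(f)`. -/
def supergraphOf {n : ℕ} (f : Eu n → ℝ) : Set (Eu (n+1)) := {z | f (tail' z) < lastc z}

/-- The paraboloid of opening `a`, center `x` and height `t`. -/
def par {n : ℕ} (a : ℝ) (x : Eu n) (t : ℝ) : Eu n → ℝ := fun y => a/2 * ‖y - x‖^2 + t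

/-- The upward unit normal `(-g,1)/√(1+|g|²)` associated to the gradient `g`. -/
def upNormal {n : ℕ} (g : Eu n) : Eu (n+1) := (Real.sqrt (1+‖g‖^2))⁻¹ • snoc' (-g) 1

/-- `f` touches the closed set `K` from above. -/
def TouchesFromAbove {n : ℕ} (f : Eu n → ℝ) (K : Set (Eu (n+1))) : Prop :=
  (graphOf f ∩ K).Nonempty ∧ supergraphOf f ∩ K = ∅

/-- The touching set `A_a(Γ; C)`: pairs `(z, η)` where `z` is a touching point of the
paraboloid `P_{a,x}` (opening `a`, center `x ∈ C`) with `Γ̄`, and `η` is the upward unit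
normal to `Σ(P_{a,x})` at `z`. -/
def ASet {n : ℕ} (a : ℝ) (Γ : Set (Eu (n+1))) (C : Set (Eu n)) :
    Set (Eu (n+1) × Eu (n+1)) :=
  {p | ∃ x ∈ C, ∃ t : ℝ, TouchesFromAbove (par a x t) (closure Γ) ∧
    p.1 ∈ graphOf (par a x t) ∩ closure Γ ∧
    p.2 = upNormal (a • (tail' p.1 - x))}

/-- The horizontal projection `A'_a(Γ; C)`. -/
def ASet' {n : ℕ} (a : ℝ) (Γ : Set (Eu (n+1))) (C : Set (Eu n)) : Set (Eu n) :=
  (fun p => tail' p.1) '' ASet a Γ C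

/-- The open cylinder `𝒞₁(0) = U^n(0,1) × ℝ`. -/
def cyl (n : ℕ) : Set (Eu (n+1)) := {z | ‖tail' z‖ < 1}

/-- Sum of the lowest `m` eigenvalues of a symmetric bilinear form (Ky Fan): the infimum
of `∑ B(uᵢ,uᵢ)` over orthonormal families `u : Fin m → E`. -/
def traceLowest (m : ℕ) {E : Type*} [NormedAddCommGroup E] [InnerProductSpace ℝ E]
    (B : E →L[ℝ] E →L[ℝ] ℝ) : ℝ :=
  sInf {s | ∃ u : Fin m → E, Orthonormal ℝ u ∧ s = ∑ i, B (u i) (u i)}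

/-- `Γ` is an `(m,h)` subset of `Ω`: it is relatively closed in `Ω` and for every `x ∈ Γ`
and `C²` function `f` near `x` such that `f|Γ` has a local maximum at `x` and `∇f(x) ≠ 0`,
the sum of the lowest `m` eigenvalues of `Hess f(x)` is at most `h|∇f(x)|`. -/
def IsMH {n : ℕ} (m : ℕ) (h : ℝ) (Ω Γ : Set (Eu (n+1))) : Prop :=
  Γ ⊆ Ω ∧ closure Γ ∩ Ω ⊆ Γ ∧
  ∀ x ∈ Γ, ∀ f : Eu (n+1) → ℝ, (∃ U ∈ 𝓝 x, ContDiffOn ℝ 2 f U) →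
    IsLocalMaxOn f Γ x → gradient f x ≠ 0 →
    traceLowest m (fderiv ℝ (fderiv ℝ f) x) ≤ h * ‖gradient f x‖

/-- Divergence of a vector field on `ℝⁿ`. -/
def divg {n : ℕ} (W : Eu n → Eu n) (x : Eu n) : ℝ :=
  LinearMap.trace ℝ (Eu n) (fderiv ℝ W x : Eu n →ₗ[ℝ] Eu n)

/-- `div(∇ψ/√(1+|∇ψ|²))(x)`, the trace of the second fundamental form of the graph of `ψ`
over `x` with respect to the upward unit normal. -/
def meanCurvGraph {n : ℕ} (ψ : Eu n → ℝ) (x : Eu n) : ℝ :=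
  divg (fun y => (Real.sqrt (1 + ‖gradient ψ y‖^2))⁻¹ • gradient ψ y) x

/-- The `m`-th stratum `Γ^(m)`: points of `Γ` that can be touched from `n+1-m` linearly
independent directions by open balls of `ℝ^(n+1)`. -/
def stratum {n : ℕ} (m : ℕ) (Γ : Set (Eu (n+1))) : Set (Eu (n+1)) :=
  {z ∈ Γ | ∃ v : Fin (n+1-m) → Eu (n+1), LinearIndependent ℝ v ∧
    ∀ i, ‖v i‖ = 1 ∧ ∃ r > (0:ℝ), Metric.ball (z + r • v i) r ∩ Γ = ∅}
lemma tail'_smul {n : ℕ} (c : ℝ) (z : Eu (n+1)) : tail' (c • z) = c • tail' z := rfl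

lemma lastc_smul {n : ℕ} (c : ℝ) (z : Eu (n+1)) : lastc (c • z) = c * lastc z := rfl

lemma tail'_snoc {n : ℕ} (x : Eu n) (t : ℝ) : tail' (snoc' x t) = x := by
  ext i; simp [tail', snoc']

lemma lastc_snoc {n : ℕ} (x : Eu n) (t : ℝ) : lastc (snoc' x t) = t := by
  simp [lastc, snoc']

lemma continuous_tail' {n : ℕ} : Continuous (tail' : Eu (n+1) → Eu n) := by
  unfold tail'
  fun_prop

lemma vertex_eq {n : ℕ} {a : ℝ} (ha : a ≠ 0) (w : Eu (n+1)) (x : Eu n) :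
    tail' w + (a * lastc (upNormal (a • (tail' w - x))))⁻¹ •
      tail' (upNormal (a • (tail' w - x))) = x := by
  set g := a • (tail' w - x) with hg
  have hs : (0:ℝ) < Real.sqrt (1 + ‖g‖^2) := Real.sqrt_pos.mpr (by positivity)
  unfold upNormal
  rw [lastc_smul, lastc_snoc, tail'_smul, tail'_snoc, mul_one, smul_neg, smul_neg,
    smul_smul, hg, smul_smul]
  have : (a * (Real.sqrt (1 + ‖g‖ ^ 2))⁻¹)⁻¹ * (Real.sqrt (1 + ‖g‖ ^ 2))⁻¹ * a = 1 := by
    field_simp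
  rw [this, one_smul]
  abel

/-- For a nonempty closed set `Γ̄ ⊆ U^n(0,1) × ℝ` and `a > 0`, let
`t_x = sup {z_{n+1} - (a/2)|z'-x|² : z ∈ Γ̄}` (assumed finite), so that
`P_{a,x}(y) = (a/2)|y-x|² + t_x` touches `Γ̄` from above. Then `x ↦ t_x` is Lipschitz on
`B^n(0,1)`, and the vertex map `(w,η) ↦ w' + η'/(a·η_{n+1})` maps `A_a(Γ;C)` onto `C`,
provided `C ⊆ B^n(0,1)` is closed and every center of `C` admits a touching point. -/
theorem stmt9 (n : ℕ) (a : ℝ) (ha : 0 < a) (Γ : Set (Eu (n+1)))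
    (hΓsub : Γ ⊆ cyl n) (hΓcl : closure Γ ∩ cyl n ⊆ Γ) (hne : Γ.Nonempty)
    (tx : Eu n → ℝ)
    (htx : ∀ x, IsLUB {s | ∃ z ∈ closure Γ, s = lastc z - a/2 * ‖tail' z - x‖^2} (tx x))
    (C : Set (Eu n)) (hC : IsClosed C) (hCsub : C ⊆ Metric.closedBall 0 1)
    (hCtouch : ∀ x ∈ C, (graphOf (par a x (tx x)) ∩ closure Γ).Nonempty) :
    (∃ K : ℝ≥0, LipschitzOnWith K tx (Metric.closedBall 0 1)) ∧
      (fun p : Eu (n+1) × Eu (n+1) => tail' p.1 + (a * lastc p.2)⁻¹ • tail' p.2) ''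
        ASet a Γ C = C := by
  have hΓ1 : ∀ z ∈ closure Γ, ‖tail' z‖ ≤ 1 := by
    intro z hz
    have hsub : closure Γ ⊆ {z : Eu (n+1) | ‖tail' z‖ ≤ 1} := by
      apply closure_minimal
      · intro w hw
        exact le_of_lt (show ‖tail' w‖ < 1 from hΓsub hw)
      · exact isClosed_le continuous_tail'.norm continuous_const
    exact hsub hz
  constructor
  · -- Lipschitz part
    refine ⟨(3*a).toNNReal, ?_⟩
    rw [lipschitzOnWith_iff_dist_le_mul]
    have key : ∀ u ∈ Metric.closedBall (0:Eu n) 1, ∀ v ∈ Metric.closedBall (0:Eu n) 1,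
        tx u - tx v ≤ 3*a * dist u v := by
      intro u hu v hv
      have hub : tx u ≤ tx v + 3*a*dist u v := by
        apply (htx u).2
        rintro s ⟨z, hz, rfl⟩
        have h1 : lastc z - a/2*‖tail' z - v‖^2 ≤ tx v := (htx v).1 ⟨z, hz, rfl⟩
        have hzn := hΓ1 z hz
        have hun : ‖u‖ ≤ 1 := by simpa using hu
        have hvn : ‖v‖ ≤ 1 := by simpa using hv
        have hB : ‖tail' z - v‖ ≤ ‖tail' z - u‖ + dist u v := by
          rw [← dist_eq_norm, ← dist_eq_norm]
          exact dist_triangle _ _ _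
        have hA2 : ‖tail' z - u‖ ≤ 2 := by
          have := norm_sub_le (tail' z) u; linarith
        have hB2 : ‖tail' z - v‖ ≤ 2 := by
          have := norm_sub_le (tail' z) v; linarith
        have hd2 : dist u v ≤ 2 := by
          have := dist_triangle u (0:Eu n) v
          simp only [dist_eq_norm, sub_zero, zero_sub, norm_neg] at this ⊢
          linarith
        have hd0 : (0:ℝ) ≤ dist u v := dist_nonneg
        have hA0 : (0:ℝ) ≤ ‖tail' z - u‖ := norm_nonneg _
        have hB0 : (0:ℝ) ≤ ‖tail' z - v‖ := norm_nonneg _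
        have hsq : ‖tail' z - v‖^2 - ‖tail' z - u‖^2 ≤ 6 * dist u v := by
          nlinarith [sq_nonneg (‖tail' z - v‖ - ‖tail' z - u‖)]
        nlinarith
      linarith
    intro x hx y hy
    have h1 := key x hx y hy
    have h2 := key y hy x hx
    rw [dist_comm y x] at h2
    have hcoe : ((3*a).toNNReal : ℝ) = 3*a := Real.coe_toNNReal _ (by positivity)
    rw [Real.dist_eq, abs_sub_le_iff, hcoe]
    exact ⟨h1, h2⟩
  · -- vertex map is onto C
    ext x0
    constructor
    · rintro ⟨p, ⟨x, hxC, t, htouch, ⟨hw, hwΓ⟩, hη⟩, rfl⟩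
      have hv : tail' p.1 + (a * lastc p.2)⁻¹ • tail' p.2 = x := by
        rw [hη]; exact vertex_eq (ne_of_gt ha) p.1 x
      show tail' p.1 + (a * lastc p.2)⁻¹ • tail' p.2 ∈ C
      rw [hv]; exact hxC
    · intro hx0
      obtain ⟨w, hwg, hwΓ⟩ := hCtouch x0 hx0
      refine ⟨(w, upNormal (a • (tail' w - x0))),
        ⟨x0, hx0, tx x0, ⟨⟨w, ⟨hwg, hwΓ⟩⟩, ?_⟩, ⟨hwg, hwΓ⟩, rfl⟩, ?_⟩
      · -- supergraph ∩ closure Γ = ∅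
        ext z
        simp only [mem_inter_iff, mem_empty_iff_false, iff_false, not_and]
        intro hz1 hz2
        have hle : lastc z - a/2*‖tail' z - x0‖^2 ≤ tx x0 := (htx x0).1 ⟨z, hz2, rfl⟩
        have hlt : a/2 * ‖tail' z - x0‖^2 + tx x0 < lastc z := hz1
        linarith
      · exact vertex_eq (ne_of_gt ha) w x0
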